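/- Let f = x_i^{u_i} x_j^{u_j} − x_k^{u_k} x_l^{u_l} ∈ I_A with i, j, k, l pairwise distinct, u_i < c_i, u_j < c_j, u_k > 0 and u_l > 0. If the monomial x_k^{u_k} x_l^{u_l} is an indispensable monomial of J = I_A ∩ k[x_i,x_j,x_k,x_l], then f is an indispensable binomial of J. -/

import Mathlib

open MvPolynomial Finsupp

variable (K : Type*) [Field K]

/-- The `A`-degree of an exponent vector `u ∈ ℕ^n` with respect to `a_1, …, a_n ∈ ℕ`, namely
`∑ i, u i * a i`. -/
def degN {n : ℕ} (a : Fin n → ℕ) (u : Fin n →₀ ℕ) : ℕ :=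
  ∑ i, u i * a i

/-- The defining ideal `I_A` of the monomial curve `x_i = t^{a_i}`: the ideal generated by all
binomials `x^u - x^v` with `∑ u_i a_i = ∑ v_i a_i` (equivalently, the kernel of
`k[x_1,…,x_n] → k[t]`, `x_i ↦ t^{a_i}`). -/
noncomputable def curveIdeal {n : ℕ} (a : Fin n → ℕ) : Ideal (MvPolynomial (Fin n) K) :=
  Ideal.span { f | ∃ u v : Fin n →₀ ℕ, degN a u = degN a v ∧
    f = monomial u (1 : K) - monomial v (1 : K) }

/-- `c` is the critical exponent of the variable `x_i`: the least positive integer `c` with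
`c * a_i ∈ ∑_{j ≠ i} ℕ a_j`. -/
def IsCritExp {n : ℕ} (a : Fin n → ℕ) (i : Fin n) (c : ℕ) : Prop :=
  IsLeast { m : ℕ | 0 < m ∧ ∃ u : Fin n →₀ ℕ, u i = 0 ∧ m * a i = degN a u } c

/-- `f` is a critical binomial of `I_A` with respect to `x_i` (where `c` is the vector of
critical exponents): `f = x_i^{c_i} - ∏_{j ≠ i} x_j^{u_{ij}} ∈ I_A`. -/
def IsCritBinom {n : ℕ} (a c : Fin n → ℕ) (i : Fin n) (f : MvPolynomial (Fin n) K) : Prop :=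
  ∃ u : Fin n →₀ ℕ, u i = 0 ∧
    f = monomial (Finsupp.single i (c i)) (1 : K) - monomial u (1 : K) ∧
    f ∈ curveIdeal K a

/-- The critical ideal `C_A`: the ideal generated by all critical binomials of `I_A`. -/
noncomputable def criticalIdeal {n : ℕ} (a c : Fin n → ℕ) :
    Ideal (MvPolynomial (Fin n) K) :=
  Ideal.span { f | ∃ i : Fin n, IsCritBinom K a c i f }

/-- `S` is a set of binomials generating `J`. -/
def IsBinomGenSet {σ : Type*} (J : Ideal (MvPolynomial σ K)) (S : Set (MvPolynomial σ K)) :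
    Prop :=
  (∀ f ∈ S, ∃ u v : σ →₀ ℕ, f = monomial u (1 : K) - monomial v (1 : K)) ∧
  Ideal.span S = J

/-- The monomial `x^u` is an indispensable monomial of `J`: every set of binomials generating `J`
contains a binomial one of whose monomials is `x^u`. -/
def IndispMonomial {σ : Type*} (J : Ideal (MvPolynomial σ K)) (u : σ →₀ ℕ) : Prop :=
  ∀ S : Set (MvPolynomial σ K), IsBinomGenSet K J S → ∃ f ∈ S, u ∈ f.support

/-- `f` is an indispensable binomial of `J`: every set of binomials generating `J` contains
`f` or `-f`. -/
def IndispBinomial {σ : Type*} (J : Ideal (MvPolynomial σ K)) (f : MvPolynomial σ K) : Prop :=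
  ∀ S : Set (MvPolynomial σ K), IsBinomGenSet K J S → f ∈ S ∨ -f ∈ S

/-- `x^u - x^v` is a primitive binomial of `I_A`: it is a nonzero binomial of `I_A` and there is
no other nonzero binomial `x^{u'} - x^{v'} ∈ I_A` with `x^{u'} ∣ x^u` and `x^{v'} ∣ x^v`. -/
def IsPrimitive {n : ℕ} (a : Fin n → ℕ) (u v : Fin n →₀ ℕ) : Prop :=
  u ≠ v ∧ (monomial u (1 : K) - monomial v (1 : K)) ∈ curveIdeal K a ∧
  ∀ u' v' : Fin n →₀ ℕ, u' ≤ u → v' ≤ v → u' ≠ v' →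
    (monomial u' (1 : K) - monomial v' (1 : K)) ∈ curveIdeal K a → u' = u ∧ v' = v


section Helpers

lemma degN_add {n : ℕ} (a : Fin n → ℕ) (u v : Fin n →₀ ℕ) :
    degN a (u + v) = degN a u + degN a v := by
  simp [degN, add_mul, Finset.sum_add_distrib]

lemma degN_single {n : ℕ} (a : Fin n → ℕ) (i : Fin n) (m : ℕ) :
    degN a (Finsupp.single i m) = m * a i := by
  simp [degN, Finsupp.single_apply, Finset.sum_ite_eq']

lemma aeval_pow_monomial {n : ℕ} (a : Fin n → ℕ) (u : Fin n →₀ ℕ) :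
    aeval (fun t => (Polynomial.X : Polynomial K) ^ a t) (monomial u (1 : K)) =
      Polynomial.X ^ degN a u := by
  rw [aeval_monomial, map_one, one_mul]
  rw [Finsupp.prod]
  simp_rw [← pow_mul]
  rw [Finset.prod_pow_eq_pow_sum]
  congr 1
  rw [degN]
  rw [Finset.sum_subset (Finset.subset_univ u.support)]
  · exact Finset.sum_congr rfl fun x _ => mul_comm _ _
  · intro x _ hx
    simp [Finsupp.notMem_support_iff.mp hx]

lemma deg_eq_of_mem {n : ℕ} (a : Fin n → ℕ) (u v : Fin n →₀ ℕ)
    (h : (monomial u (1 : K) - monomial v (1 : K)) ∈ curveIdeal K a) :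
    degN a u = degN a v := by
  have hker : curveIdeal K a ≤ RingHom.ker (aeval (R := K)
      (fun t => (Polynomial.X : Polynomial K) ^ a t)).toRingHom := by
    rw [curveIdeal, Ideal.span_le]
    rintro f ⟨u', v', hd, rfl⟩
    simp only [SetLike.mem_coe, RingHom.mem_ker, AlgHom.toRingHom_eq_coe, RingHom.coe_coe,
      map_sub, aeval_pow_monomial, hd, sub_self]
  have := hker h
  simp only [RingHom.mem_ker, AlgHom.toRingHom_eq_coe, RingHom.coe_coe, map_sub,
    aeval_pow_monomial, sub_eq_zero] at this
  have := congrArg Polynomial.natDegree this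
  simpa using this

lemma support_binomial {σ : Type*} (α β γ : σ →₀ ℕ)
    (h : γ ∈ (monomial α (1 : K) - monomial β (1 : K)).support) : γ = α ∨ γ = β := by
  classical
  by_contra hcon
  push_neg at hcon
  rw [MvPolynomial.mem_support_iff, coeff_sub, coeff_monomial, coeff_monomial,
    if_neg (Ne.symm hcon.1), if_neg (Ne.symm hcon.2), sub_zero] at h
  exact h rfl

lemma no_shared_var {N : ℕ} (b : Fin N → ℕ) (v m : Fin N →₀ ℕ)
    (hind : IndispMonomial K (curveIdeal K b) v)
    (hm : degN b m = degN b v) (hmv : m ≠ v) (t : Fin N) (hbt : 0 < b t)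
    (hvt : 0 < v t) (hmt : 0 < m t) : False := by
  set e : Fin N →₀ ℕ := Finsupp.single t 1 with he
  have hev : e ≤ v := Finsupp.single_le_iff.2 hvt
  have hem : e ≤ m := Finsupp.single_le_iff.2 hmt
  have hdegv : degN b (v - e) + b t = degN b v := by
    have h0 : degN b ((v - e) + e) = degN b v := by rw [tsub_add_cancel_of_le hev]
    rw [degN_add, he, degN_single, one_mul] at h0
    exact h0
  have hdegm : degN b (m - e) + b t = degN b v := by
    have h0 : degN b ((m - e) + e) = degN b m := by rw [tsub_add_cancel_of_le hem]
    rw [degN_add, he, degN_single, one_mul, hm] at h0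
    exact h0
  have hdeq : degN b (v - e) = degN b (m - e) := by omega
  set h : MvPolynomial (Fin N) K := monomial (v - e) 1 - monomial (m - e) 1 with hh
  set S' : Set (MvPolynomial (Fin N) K) :=
    {f | ∃ α β : Fin N →₀ ℕ, degN b α = degN b β ∧ α ≠ v ∧ β ≠ v ∧
      f = monomial α (1 : K) - monomial β (1 : K)} ∪ {h} with hS'def
  have hvm_mem : (monomial v (1 : K) - monomial m 1) ∈ Ideal.span S' := by
    have : monomial e (1 : K) * h = monomial v 1 - monomial m 1 := by
      rw [hh, mul_sub, monomial_mul, monomial_mul, one_mul,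
        add_tsub_cancel_of_le hev, add_tsub_cancel_of_le hem]
    rw [← this]
    exact Ideal.mul_mem_left _ _ (Ideal.subset_span (Or.inr rfl))
  have hS' : IsBinomGenSet K (curveIdeal K b) S' := by
    constructor
    · rintro f (⟨α, β, _, _, _, rfl⟩ | rfl)
      · exact ⟨α, β, rfl⟩
      · exact ⟨v - e, m - e, rfl⟩
    · apply le_antisymm
      · rw [Ideal.span_le]
        rintro f (⟨α, β, hd, _, _, rfl⟩ | rfl)
        · exact Ideal.subset_span ⟨α, β, hd, rfl⟩
        · exact Ideal.subset_span ⟨v - e, m - e, hdeq, rfl⟩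
      · rw [curveIdeal, Ideal.span_le]
        rintro f ⟨α, β, hd, rfl⟩
        by_cases hα : α = v <;> by_cases hβ : β = v
        · subst hα; subst hβ; simp
        · subst hα
          have h1 : (monomial m (1 : K) - monomial β 1) ∈ Ideal.span S' :=
            Ideal.subset_span (Or.inl ⟨m, β, by rw [hm, hd], hmv, hβ, rfl⟩)
          have := Ideal.add_mem _ hvm_mem h1
          simpa using this
        · subst hβ
          have h1 : (monomial α (1 : K) - monomial m 1) ∈ Ideal.span S' :=
            Ideal.subset_span (Or.inl ⟨α, m, by rw [hm, ← hd], hα, hmv, rfl⟩)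
          have h2 := Ideal.sub_mem _ h1 hvm_mem
          rw [SetLike.mem_coe]
          convert h2 using 1
          ring
        · exact Ideal.subset_span (Or.inl ⟨α, β, hd, hα, hβ, rfl⟩)
  obtain ⟨f'', hfS, hsupp⟩ := hind S' hS'
  have hvne : v - e ≠ v := by
    intro hcon
    have := congrArg (fun w => w t) hcon
    simp only [Finsupp.tsub_apply, he, Finsupp.single_eq_same] at this
    omega
  have hmne : m - e ≠ v := by
    intro hcon
    rw [hcon] at hdegm
    omega
  rcases hfS with ⟨α, β, _, hα, hβ, rfl⟩ | rfl
  · rcases support_binomial K α β v hsupp with h1 | h1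
    · exact hα h1.symm
    · exact hβ h1.symm
  · rcases support_binomial K _ _ v hsupp with h1 | h1
    · exact hvne h1.symm
    · exact hmne h1.symm

lemma arith_unique {n : ℕ} (a c : Fin n → ℕ) (ha : ∀ i, 0 < a i)
    (hc : ∀ i, IsCritExp a i (c i)) (i j : Fin n) (hij : i ≠ j) (ui uj w0 w1 : ℕ)
    (hi : ui < c i) (hj : uj < c j)
    (heq : w0 * a i + w1 * a j = ui * a i + uj * a j) : w0 = ui ∧ w1 = uj := by
  rcases lt_trichotomy w0 ui with h | h | h
  · exfalso
    have hlt : w0 * a i < ui * a i := (Nat.mul_lt_mul_right (ha i)).2 h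
    have hw1 : uj < w1 := by
      by_contra h'
      push_neg at h'
      have : w1 * a j ≤ uj * a j := Nat.mul_le_mul_right _ h'
      omega
    have key : (ui - w0) * a i = (w1 - uj) * a j := by
      rw [Nat.sub_mul, Nat.sub_mul]
      omega
    have hmem : ui - w0 ∈ { m : ℕ | 0 < m ∧ ∃ u : Fin n →₀ ℕ, u i = 0 ∧
        m * a i = degN a u } := by
      refine ⟨by omega, Finsupp.single j (w1 - uj), ?_, ?_⟩
      · rw [Finsupp.single_apply, if_neg (fun hh => hij hh.symm)]
      · rw [degN_single]
        exact key
    have := (hc i).2 hmem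
    omega
  · refine ⟨h, ?_⟩
    subst h
    have : w1 * a j = uj * a j := by omega
    exact Nat.eq_of_mul_eq_mul_right (ha j) this
  · exfalso
    have hlt : ui * a i < w0 * a i := (Nat.mul_lt_mul_right (ha i)).2 h
    have hw1 : w1 < uj := by
      by_contra h'
      push_neg at h'
      have : uj * a j ≤ w1 * a j := Nat.mul_le_mul_right _ h'
      omega
    have key : (uj - w1) * a j = (w0 - ui) * a i := by
      rw [Nat.sub_mul, Nat.sub_mul]
      omega
    have hmem : uj - w1 ∈ { m : ℕ | 0 < m ∧ ∃ u : Fin n →₀ ℕ, u j = 0 ∧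
        m * a j = degN a u } := by
      refine ⟨by omega, Finsupp.single i (w0 - ui), ?_, ?_⟩
      · rw [Finsupp.single_apply, if_neg hij]
      · rw [degN_single]
        exact key
    have := (hc j).2 hmem
    omega

end Helpers

/-- Let `f = x_i^{u_i} x_j^{u_j} - x_k^{u_k} x_l^{u_l} ∈ I_A` with
`i, j, k, l` pairwise distinct, `u_i < c_i`, `u_j < c_j`, `u_k > 0` and `u_l > 0`. If the
monomial `x_k^{u_k} x_l^{u_l}` is an indispensable monomial of
`J = I_A ∩ k[x_i, x_j, x_k, x_l]` (the toric ideal of `{a_i, a_j, a_k, a_l}`), then `f` is an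
indispensable binomial of `J`. -/
theorem statement15 {n : ℕ} (a c : Fin n → ℕ) (ha : ∀ i, 0 < a i)
    (hgcd : Finset.univ.gcd a = 1) (hc : ∀ i, IsCritExp a i (c i))
    (i j k l : Fin n) (hij : i ≠ j) (hik : i ≠ k) (hil : i ≠ l) (hjk : j ≠ k)
    (hjl : j ≠ l) (hkl : k ≠ l) (ui uj uk ul : ℕ)
    (hmem : (monomial (Finsupp.single i ui + Finsupp.single j uj) (1 : K) -
        monomial (Finsupp.single k uk + Finsupp.single l ul) (1 : K)) ∈ curveIdeal K a)
    (hi : ui < c i) (hj : uj < c j) (hk : 0 < uk) (hl : 0 < ul)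
    (hind : IndispMonomial K (curveIdeal K ![a i, a j, a k, a l])
      (Finsupp.single (2 : Fin 4) uk + Finsupp.single (3 : Fin 4) ul)) :
    IndispBinomial K (curveIdeal K ![a i, a j, a k, a l])
      (monomial (Finsupp.single (0 : Fin 4) ui + Finsupp.single (1 : Fin 4) uj) (1 : K) -
        monomial (Finsupp.single (2 : Fin 4) uk + Finsupp.single (3 : Fin 4) ul) (1 : K)) := by
  classical
  set b : Fin 4 → ℕ := ![a i, a j, a k, a l] with hb
  have hb0 : b 0 = a i := rfl
  have hb1 : b 1 = a j := rfl
  have hb2 : b 2 = a k := rfl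
  have hb3 : b 3 = a l := rfl
  set u4 : Fin 4 →₀ ℕ := Finsupp.single (0 : Fin 4) ui + Finsupp.single (1 : Fin 4) uj
    with hu4
  set v4 : Fin 4 →₀ ℕ := Finsupp.single (2 : Fin 4) uk + Finsupp.single (3 : Fin 4) ul
    with hv4
  have hv42 : v4 2 = uk := by simp [hv4, Finsupp.single_apply]
  have hv43 : v4 3 = ul := by simp [hv4, Finsupp.single_apply]
  have hUV : ui * a i + uj * a j = uk * a k + ul * a l := by
    have := deg_eq_of_mem K a _ _ hmem
    rwa [degN_add, degN_add, degN_single, degN_single, degN_single, degN_single] at this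
  have hdv4 : degN b v4 = uk * a k + ul * a l := by
    rw [hv4, degN_add, degN_single, degN_single, hb2, hb3]
  have hdu4 : degN b u4 = ui * a i + uj * a j := by
    rw [hu4, degN_add, degN_single, degN_single, hb0, hb1]
  have core : ∀ w : Fin 4 →₀ ℕ,
      (monomial w (1 : K) - monomial v4 1) ∈ curveIdeal K b → w ≠ v4 → w = u4 := by
    intro w hwJ hwv
    have hdw : degN b w = degN b v4 := deg_eq_of_mem K b _ _ hwJ
    have hw2 : w 2 = 0 := by
      by_contra h2
      exact no_shared_var K b v4 w hind hdw hwv 2 (hb2 ▸ ha k)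
        (hv42 ▸ hk) (Nat.pos_of_ne_zero h2)
    have hw3 : w 3 = 0 := by
      by_contra h3
      exact no_shared_var K b v4 w hind hdw hwv 3 (hb3 ▸ ha l)
        (hv43 ▸ hl) (Nat.pos_of_ne_zero h3)
    have hsum : degN b w = w 0 * a i + w 1 * a j := by
      rw [degN, Fin.sum_univ_four, hw2, hw3, hb0, hb1, hb2, hb3]
      ring
    have heq : w 0 * a i + w 1 * a j = ui * a i + uj * a j := by
      rw [← hsum, hdw, hdv4, ← hUV]
    obtain ⟨h0, h1⟩ := arith_unique a c ha hc i j hij ui uj (w 0) (w 1) hi hj heq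
    ext t
    fin_cases t
    · simpa [hu4, Finsupp.single_apply] using h0
    · simpa [hu4, Finsupp.single_apply] using h1
    · simpa [hu4, Finsupp.single_apply] using hw2
    · simpa [hu4, Finsupp.single_apply] using hw3
  intro S hS
  obtain ⟨f', hf'S, hv⟩ := hind S hS
  obtain ⟨w1, w2, rfl⟩ := hS.1 f' hf'S
  have hf'J : (monomial w1 (1 : K) - monomial w2 1) ∈ curveIdeal K b :=
    hS.2 ▸ Ideal.subset_span hf'S
  have hne : w1 ≠ w2 := by
    intro hcon
    rw [hcon, sub_self] at hv
    simp at hv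
  rcases support_binomial K w1 w2 v4 hv with h1 | h1
  · right
    have hJ2 : (monomial w2 (1 : K) - monomial v4 1) ∈ curveIdeal K b := by
      have := neg_mem hf'J
      rw [neg_sub, ← h1] at this
      exact this
    have hw2 := core w2 hJ2 (h1 ▸ hne).symm
    rw [neg_sub, h1, ← hw2]
    exact hf'S
  · left
    have hJ1 : (monomial w1 (1 : K) - monomial v4 1) ∈ curveIdeal K b := by
      rw [h1]
      exact hf'J
    have hw1 := core w1 hJ1 (h1 ▸ hne)
    rw [h1, ← hw1]
    exact hf'S
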